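/- Let (X,d,μ) be a metric measure space with μ doubling, without atoms, with balls of finite positive measure, and μ(X) = ∞. Let d̃(x,y) = inf{μ(B) : B a closed ball containing x and y} and let B̃(x,r) = {y : d̃(x,y) ≤ r} be the quasi-balls. Then μ(B̃(x,r)) ≍ r uniformly: there exist c, C > 0 with c·r ≤ μ(B̃(x,r)) ≤ C·r for all x ∈ X and r > 0. -/

import Mathlib

open Real MeasureTheory Metric

/-- The infimum of the measures of closed balls containing both `x` and `y`. -/
noncomputable def qdist {X : Type*} [MetricSpace X] [MeasurableSpace X]
    (μ : Measure X) (x y : X) : ENNReal :=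
  ⨅ (z : X) (r : ℝ) (_ : x ∈ Metric.closedBall z r ∧ y ∈ Metric.closedBall z r),
    μ (Metric.closedBall z r)

section Aux

variable {X : Type*} [MetricSpace X] [MeasurableSpace X] [BorelSpace X] (μ : Measure X)

/-- Small balls have small measure. -/
lemma qdist_aux_small
    (hfin : ∀ (x : X) (r : ℝ), μ (Metric.closedBall x r) < ⊤)
    (hatomless : ∀ x : X, μ {x} = 0) (x : X) {ε : ENNReal} (hε : 0 < ε) :
    ∃ t : ℝ, 0 < t ∧ μ (closedBall x t) < ε := by
  have hanti : Antitone (fun n : ℕ => closedBall x ((n+1:ℝ)⁻¹)) := by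
    intro n m hnm
    apply closedBall_subset_closedBall
    apply inv_anti₀ (by positivity)
    exact_mod_cast Nat.add_le_add_right hnm 1
  have hInt : (⋂ n : ℕ, closedBall x ((n+1:ℝ)⁻¹)) = {x} := by
    ext y
    simp only [Set.mem_iInter, mem_closedBall, Set.mem_singleton_iff]
    constructor
    · intro h
      have : dist y x ≤ 0 := by
        by_contra hc
        push_neg at hc
        obtain ⟨n, hn⟩ := exists_nat_one_div_lt hc
        have := h n
        rw [one_div] at hn
        linarith
      exact dist_le_zero.1 this
    · intro h; subst h; intro n; simp; positivity
  have := hanti.measure_iInter (μ := μ)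
    (fun n => (measurableSet_closedBall).nullMeasurableSet) ⟨0, (hfin x _).ne⟩
  rw [hInt, hatomless] at this
  have h2 : ⨅ n : ℕ, μ (closedBall x ((n+1:ℝ)⁻¹)) < ε := this ▸ hε
  obtain ⟨n, hn⟩ := iInf_lt_iff.1 h2
  exact ⟨(n+1:ℝ)⁻¹, by positivity, hn⟩

/-- Big balls have big measure. -/
lemma qdist_aux_big (hinfinite : μ (Set.univ : Set X) = ⊤) (x : X)
    {A : ENNReal} (hA : A < ⊤) :
    ∃ t : ℝ, 0 < t ∧ A < μ (closedBall x t) := by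
  have hmono : Monotone (fun n : ℕ => closedBall x (n + 1 : ℝ)) := by
    intro n m hnm
    apply closedBall_subset_closedBall
    exact_mod_cast Nat.add_le_add_right hnm 1
  have hUn : (⋃ n : ℕ, closedBall x (n + 1 : ℝ)) = Set.univ := by
    ext y
    simp only [Set.mem_iUnion, mem_closedBall, Set.mem_univ, iff_true]
    obtain ⟨n, hn⟩ := exists_nat_gt (dist y x)
    exact ⟨n, by push_cast; linarith⟩
  have h1 : (⨆ n : ℕ, μ (closedBall x (n + 1 : ℝ))) = ⊤ := by
    rw [← hmono.measure_iUnion, hUn, hinfinite]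
  have h2 : A < ⨆ n : ℕ, μ (closedBall x (n + 1 : ℝ)) := h1 ▸ hA
  obtain ⟨n, hn⟩ := lt_iSup_iff.1 h2
  exact ⟨(n + 1 : ℝ), by positivity, hn⟩

end Aux

theorem measure_quasi_ball_comparable_radius {X : Type*} [MetricSpace X]
    [MeasurableSpace X] [BorelSpace X] (μ : Measure X)
    (hpos : ∀ (x : X) (r : ℝ), 0 < r → 0 < μ (Metric.closedBall x r))
    (hfin : ∀ (x : X) (r : ℝ), μ (Metric.closedBall x r) < ⊤)
    (hatomless : ∀ x : X, μ {x} = 0)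
    (hinfinite : μ Set.univ = ⊤)
    (C₀ : ENNReal) (hC₀ : C₀ < ⊤)
    (hdoubling : ∀ (x : X) (r : ℝ), 0 < r →
      μ (Metric.closedBall x (2 * r)) ≤ C₀ * μ (Metric.closedBall x r)) :
    ∃ c > (0:ℝ), ∃ C > (0:ℝ), ∀ x : X, ∀ r : ℝ, 0 < r →
      ENNReal.ofReal (c * r) ≤ μ {y : X | qdist μ x y ≤ ENNReal.ofReal r} ∧
      μ {y : X | qdist μ x y ≤ ENNReal.ofReal r} ≤ ENNReal.ofReal (C * r) := by
  -- X is nonempty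
  have hne : Nonempty X := by
    by_contra h
    rw [not_nonempty_iff] at h
    rw [Set.univ_eq_empty_iff.2 h, measure_empty] at hinfinite
    exact ENNReal.zero_ne_top hinfinite
  obtain ⟨x₀⟩ := hne
  -- C₀ ≠ 0
  have hC₀0 : C₀ ≠ 0 := by
    intro h
    have hd := hdoubling x₀ 1 one_pos
    rw [h, zero_mul, mul_one] at hd
    exact absurd (le_antisymm hd zero_le) (hpos x₀ 2 two_pos).ne'
  have hC₀t : C₀ ≠ ⊤ := hC₀.ne
  have hC₀pos : 0 < C₀.toReal := ENNReal.toReal_pos hC₀0 hC₀t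
  refine ⟨C₀.toReal⁻¹, by positivity, C₀.toReal ^ 3, by positivity, fun x r hr => ?_⟩
  have hrpos : (0:ENNReal) < ENNReal.ofReal r := ENNReal.ofReal_pos.2 hr
  constructor
  · -- LOWER BOUND
    set S : Set ℝ := {t | 0 ≤ t ∧ μ (closedBall x t) ≤ ENNReal.ofReal r} with hS
    have hmem0 : (0:ℝ) ∈ S := by
      refine ⟨le_refl 0, ?_⟩
      rw [closedBall_zero, hatomless]
      exact zero_le
    obtain ⟨t₀, ht₀pos, ht₀⟩ := qdist_aux_big μ hinfinite x (A := ENNReal.ofReal r)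
      ENNReal.ofReal_lt_top
    have hbdd : BddAbove S := by
      refine ⟨t₀, fun s hs => ?_⟩
      by_contra hc
      push_neg at hc
      exact absurd (le_trans (measure_mono (closedBall_subset_closedBall hc.le)) hs.2)
        (not_le.2 ht₀)
    set T := sSup S with hT
    obtain ⟨t₁, ht₁pos, ht₁⟩ := qdist_aux_small μ hfin hatomless x hrpos
    have hTpos : 0 < T := lt_of_lt_of_le ht₁pos (le_csSup hbdd ⟨ht₁pos.le, ht₁.le⟩)
    obtain ⟨s, hsS, hs⟩ := exists_lt_of_lt_csSup ⟨0, hmem0⟩ (half_lt_self hTpos)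
    have hspos : 0 < s := lt_of_lt_of_le (half_pos hTpos) hs.le
    have h2s : ¬ ((2 * s) ∈ S) := by
      intro h
      have : 2 * s ≤ T := le_csSup hbdd h
      linarith
    have h2s' : ENNReal.ofReal r < μ (closedBall x (2 * s)) := by
      rw [hS] at h2s
      simp only [Set.mem_setOf_eq, not_and, not_le] at h2s
      exact h2s (by linarith)
    have hkey : ENNReal.ofReal r ≤ C₀ * μ (closedBall x s) :=
      le_trans h2s'.le (hdoubling x s hspos)
    -- closedBall x s ⊆ quasi-ball
    have hsub : closedBall x s ⊆ {y : X | qdist μ x y ≤ ENNReal.ofReal r} := by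
      intro y hy
      have hq : qdist μ x y ≤ μ (closedBall x s) := by
        refine iInf_le_of_le x (iInf_le_of_le s (iInf_le_of_le ?_ le_rfl))
        exact ⟨mem_closedBall_self hspos.le, hy⟩
      exact le_trans hq hsS.2
    have hlow : ENNReal.ofReal r / C₀ ≤ μ {y : X | qdist μ x y ≤ ENNReal.ofReal r} := by
      refine le_trans (ENNReal.div_le_of_le_mul (by rwa [mul_comm] at hkey)) (measure_mono hsub)
    have heq : ENNReal.ofReal (C₀.toReal⁻¹ * r) = ENNReal.ofReal r / C₀ := by
      rw [ENNReal.ofReal_mul (by positivity), ENNReal.ofReal_inv_of_pos hC₀pos,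
        ENNReal.ofReal_toReal hC₀t, ENNReal.div_eq_inv_mul]
    rw [heq]
    exact hlow
  · -- UPPER BOUND
    -- Claim: every point of the quasi-ball satisfies μ (closedBall x (dist x y)) ≤ C₀^2 * r
    have claimA : ∀ y : X, qdist μ x y ≤ ENNReal.ofReal r →
        μ (closedBall x (dist y x)) ≤ C₀ ^ 2 * ENNReal.ofReal r := by
      intro y hy
      refine ENNReal.le_of_forall_pos_le_add fun ε hε hfinB => ?_
      set δ : ENNReal := (ε : ENNReal) / C₀ ^ 2 with hδ
      have hC₀sq0 : C₀ ^ 2 ≠ 0 := pow_ne_zero _ hC₀0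
      have hC₀sqt : C₀ ^ 2 ≠ ⊤ := ENNReal.pow_ne_top hC₀t
      have hδpos : 0 < δ := ENNReal.div_pos (by exact_mod_cast hε.ne') hC₀sqt
      have hlt : qdist μ x y < ENNReal.ofReal r + δ :=
        lt_of_le_of_lt hy (ENNReal.lt_add_right ENNReal.ofReal_ne_top hδpos.ne')
      rw [qdist] at hlt
      obtain ⟨z, hz⟩ := iInf_lt_iff.1 hlt
      obtain ⟨s, hs⟩ := iInf_lt_iff.1 hz
      obtain ⟨⟨hxz, hyz⟩, hμB⟩ := iInf_lt_iff.1 hs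
      have hs0 : 0 ≤ s := nonempty_closedBall.1 ⟨x, hxz⟩
      rcases eq_or_lt_of_le hs0 with hseq | hspos
      · -- s = 0 : then x = y = z and the ball is a point
        have hxz' : dist x z ≤ 0 := hseq ▸ (mem_closedBall.1 hxz)
        have hyz' : dist y z ≤ 0 := hseq ▸ (mem_closedBall.1 hyz)
        have hxy : dist y x = 0 := by
          have := dist_triangle y z x
          rw [dist_comm z x] at this
          have h0 : dist y x ≤ 0 := by linarith
          linarith [dist_nonneg (x := y) (y := x)]
        rw [hxy, closedBall_zero, hatomless]
        exact zero_le
      · -- s > 0 : use doubling twice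
        have hsub2 : closedBall x (dist y x) ⊆ closedBall z (2 * (2 * s)) := by
          intro w hw
          rw [mem_closedBall] at hw hxz hyz ⊢
          have h1 : dist y x ≤ dist y z + dist z x := dist_triangle y z x
          rw [dist_comm z x] at h1
          have h2 : dist w z ≤ dist w x + dist x z := dist_triangle w x z
          linarith
        have hchain : μ (closedBall z (2 * (2 * s))) ≤ C₀ ^ 2 * μ (closedBall z s) := by
          calc μ (closedBall z (2 * (2 * s))) ≤ C₀ * μ (closedBall z (2 * s)) :=
                hdoubling z (2 * s) (by linarith)
            _ ≤ C₀ * (C₀ * μ (closedBall z s)) := by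
                exact mul_le_mul_right (hdoubling z s hspos) C₀
            _ = C₀ ^ 2 * μ (closedBall z s) := by ring
        calc μ (closedBall x (dist y x)) ≤ C₀ ^ 2 * μ (closedBall z s) :=
              le_trans (measure_mono hsub2) hchain
          _ ≤ C₀ ^ 2 * (ENNReal.ofReal r + δ) := mul_le_mul_right hμB.le _
          _ = C₀ ^ 2 * ENNReal.ofReal r + C₀ ^ 2 * δ := by ring
          _ = C₀ ^ 2 * ENNReal.ofReal r + ε := by
              rw [hδ, ENNReal.mul_div_cancel hC₀sq0 hC₀sqt]
    -- now take the sup of admissible radii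
    set A : ENNReal := C₀ ^ 2 * ENNReal.ofReal r with hA
    have hAt : A < ⊤ := ENNReal.mul_lt_top (ENNReal.pow_lt_top hC₀) ENNReal.ofReal_lt_top
    set S : Set ℝ := {t | 0 ≤ t ∧ μ (closedBall x t) ≤ A} with hS
    have hmem0 : (0:ℝ) ∈ S := by
      refine ⟨le_refl 0, ?_⟩
      rw [closedBall_zero, hatomless]
      exact zero_le
    obtain ⟨t₀, ht₀pos, ht₀⟩ := qdist_aux_big μ hinfinite x hAt
    have hbdd : BddAbove S := by
      refine ⟨t₀, fun s hs => ?_⟩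
      by_contra hc
      push_neg at hc
      exact absurd (le_trans (measure_mono (closedBall_subset_closedBall hc.le)) hs.2)
        (not_le.2 ht₀)
    set T := sSup S with hT
    have hsubT : {y : X | qdist μ x y ≤ ENNReal.ofReal r} ⊆ closedBall x T := by
      intro y hy
      rw [mem_closedBall]
      exact le_csSup hbdd ⟨dist_nonneg, claimA y hy⟩
    have hT0 : 0 ≤ T := le_csSup hbdd hmem0
    rcases eq_or_lt_of_le hT0 with hTeq | hTpos
    · have : μ {y : X | qdist μ x y ≤ ENNReal.ofReal r} = 0 := by
        refine le_antisymm ?_ zero_le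
        calc μ {y : X | qdist μ x y ≤ ENNReal.ofReal r} ≤ μ (closedBall x T) :=
              measure_mono hsubT
          _ = 0 := by rw [← hTeq, closedBall_zero, hatomless]
      rw [this]
      exact zero_le
    · obtain ⟨s, hsS, hs⟩ := exists_lt_of_lt_csSup ⟨0, hmem0⟩ (half_lt_self hTpos)
      have hspos : 0 < s := lt_of_lt_of_le (half_pos hTpos) hs.le
      have hTle : T ≤ 2 * s := by
        have := csSup_le ⟨0, hmem0⟩ (fun b hb => le_csSup hbdd hb)
        linarith [hs]
      have hfinal : μ {y : X | qdist μ x y ≤ ENNReal.ofReal r} ≤ C₀ ^ 3 * ENNReal.ofReal r := by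
        calc μ {y : X | qdist μ x y ≤ ENNReal.ofReal r} ≤ μ (closedBall x (2 * s)) :=
              measure_mono (hsubT.trans (closedBall_subset_closedBall hTle))
          _ ≤ C₀ * μ (closedBall x s) := hdoubling x s hspos
          _ ≤ C₀ * A := mul_le_mul_right hsS.2 _
          _ = C₀ ^ 3 * ENNReal.ofReal r := by rw [hA]; ring
      refine le_trans hfinal (le_of_eq ?_)
      rw [ENNReal.ofReal_mul (by positivity), ENNReal.ofReal_pow hC₀pos.le,
        ENNReal.ofReal_toReal hC₀t]
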